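/- Let ρ = e^{iπ/3} and Λ_ρ = ℤ + ℤρ, with Weierstrass zeta function ζ of Λ_ρ and quasi-periods η₁ = 2ζ(1/2), η₂ = 2ζ(ρ/2). Then ζ((1 + ρ)/3) = (η₁ + η₂)/3; that is, the Hecke function satisfies Z_{1/3, 1/3}(ρ) = 0, so z = (1+ρ)/3 is an extra (non-half-period) critical point of the Green function on the hexagonal torus E_ρ. -/

import Mathlib

noncomputable section

/-- The lattice point `m ω₁ + n ω₂` attached to an integer pair. -/
def latPt (ω₁ ω₂ : ℂ) (p : ℤ × ℤ) : ℂ := p.1 * ω₁ + p.2 * ω₂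

/-- Membership in the lattice `Λ = ℤω₁ + ℤω₂`. -/
def IsLatticePt (ω₁ ω₂ z : ℂ) : Prop := ∃ m n : ℤ, z = m * ω₁ + n * ω₂

/-- The Weierstrass `℘`-function of the lattice `ℤω₁ + ℤω₂`. -/
def wp (ω₁ ω₂ : ℂ) (z : ℂ) : ℂ :=
  1 / z ^ 2 + ∑' p : {p : ℤ × ℤ // p ≠ 0},
    (1 / (z - latPt ω₁ ω₂ p.1) ^ 2 - 1 / (latPt ω₁ ω₂ p.1) ^ 2)

/-- The Weierstrass `ζ`-function of the lattice `ℤω₁ + ℤω₂`. -/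
def wzeta (ω₁ ω₂ : ℂ) (z : ℂ) : ℂ :=
  1 / z + ∑' p : {p : ℤ × ℤ // p ≠ 0},
    (1 / (z - latPt ω₁ ω₂ p.1) + 1 / latPt ω₁ ω₂ p.1 + z / (latPt ω₁ ω₂ p.1) ^ 2)

/-- The derivative `℘'` of the Weierstrass `℘`-function. -/
def wpDeriv (ω₁ ω₂ : ℂ) : ℂ → ℂ := deriv (wp ω₁ ω₂)

/-- The quasi-period `η₁(τ) = 2ζ(1/2)` of the lattice `Λ_τ = ℤ + ℤτ`. -/
def eta1 (τ : ℂ) : ℂ := 2 * wzeta 1 τ (1 / 2)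

/-- The quasi-period `η₂(τ) = 2ζ(τ/2)` of the lattice `Λ_τ = ℤ + ℤτ`. -/
def eta2 (τ : ℂ) : ℂ := 2 * wzeta 1 τ (τ / 2)

/-- The Hecke function `Z_{r,s}(τ) = ζ(r + sτ; Λ_τ) − r η₁(τ) − s η₂(τ)`. -/
def heckeZ (r s : ℝ) (τ : ℂ) : ℂ :=
  wzeta 1 τ ((r : ℂ) + (s : ℂ) * τ) - (r : ℂ) * eta1 τ - (s : ℂ) * eta2 τ

namespace Stmt11Aux

open Complex Filter Metric

/-- The cube sum `∑ 1/(z-ω)³`. -/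
def S3 (ρ : ℂ) (z : ℂ) : ℂ := ∑' p : ℤ × ℤ, 1 / (z - latPt 1 ρ p) ^ 3

/-- Complement of the lattice. -/
def Dset (ρ : ℂ) : Set ℂ := {z : ℂ | ∀ p : ℤ × ℤ, z ≠ latPt 1 ρ p}

variable {ρ : ℂ}

lemma latPt_def (ρ : ℂ) (p : ℤ × ℤ) : latPt 1 ρ p = (p.1 : ℂ) + (p.2 : ℂ) * ρ := by
  simp [latPt]

lemma latPt_zero (ρ : ℂ) : latPt 1 ρ (0 : ℤ × ℤ) = 0 := by simp [latPt]

lemma latPt_add (ρ : ℂ) (p q : ℤ × ℤ) :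
    latPt 1 ρ (p + q) = latPt 1 ρ p + latPt 1 ρ q := by
  simp only [latPt_def, Prod.fst_add, Prod.snd_add]
  push_cast; ring

lemma latPt_sub (ρ : ℂ) (p q : ℤ × ℤ) :
    latPt 1 ρ (p - q) = latPt 1 ρ p - latPt 1 ρ q := by
  simp only [latPt_def, Prod.fst_sub, Prod.snd_sub]
  push_cast; ring

lemma latPt_neg (ρ : ℂ) (p : ℤ × ℤ) : latPt 1 ρ (-p) = -latPt 1 ρ p := by
  simp only [latPt_def, Prod.fst_neg, Prod.snd_neg]
  push_cast; ring

lemma latPt_re (hre : ρ.re = 1/2) (p : ℤ × ℤ) :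
    (latPt 1 ρ p).re = (p.1 : ℝ) + (p.2 : ℝ) * (1/2) := by
  rw [latPt_def]
  simp [Complex.add_re, Complex.mul_re, hre]

lemma latPt_im (him : ρ.im = Real.sqrt 3 / 2) (p : ℤ × ℤ) :
    (latPt 1 ρ p).im = (p.2 : ℝ) * (Real.sqrt 3 / 2) := by
  rw [latPt_def]
  simp [Complex.add_im, Complex.mul_im, him]

lemma sqrt3_pos : (0:ℝ) < Real.sqrt 3 := Real.sqrt_pos.mpr (by norm_num)

lemma max_le_norm (hre : ρ.re = 1/2) (him : ρ.im = Real.sqrt 3 / 2) (p : ℤ × ℤ) :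
    max |(p.1 : ℝ)| |(p.2 : ℝ)| ≤ Real.sqrt 2 * ‖latPt 1 ρ p‖ := by
  have h0 : (0:ℝ) ≤ max |(p.1 : ℝ)| |(p.2 : ℝ)| := le_trans (abs_nonneg _) (le_max_left _ _)
  have hn : ‖latPt 1 ρ p‖ ^ 2
      = ((p.1 : ℝ) + (p.2 : ℝ) * (1/2)) ^ 2 + ((p.2 : ℝ) * (Real.sqrt 3 / 2)) ^ 2 := by
    rw [Complex.sq_norm, Complex.normSq_apply, latPt_re hre, latPt_im him]
    ring
  have h3 : Real.sqrt 3 * Real.sqrt 3 = 3 := Real.mul_self_sqrt (by norm_num)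
  have hsq : (max |(p.1 : ℝ)| |(p.2 : ℝ)|) ^ 2 ≤ 2 * ‖latPt 1 ρ p‖ ^ 2 := by
    rcases max_cases |(p.1 : ℝ)| |(p.2 : ℝ)| with ⟨h1, _⟩ | ⟨h1, _⟩ <;> rw [h1, hn] <;>
      nlinarith [sq_nonneg ((p.1:ℝ) + (p.2:ℝ)), sq_nonneg ((p.1:ℝ) - (p.2:ℝ)),
        _root_.sq_abs ((p.1:ℝ)), _root_.sq_abs ((p.2:ℝ))]
  calc max |(p.1 : ℝ)| |(p.2 : ℝ)|
      = Real.sqrt ((max |(p.1 : ℝ)| |(p.2 : ℝ)|) ^ 2) := (Real.sqrt_sq h0).symm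
    _ ≤ Real.sqrt (2 * ‖latPt 1 ρ p‖ ^ 2) := Real.sqrt_le_sqrt hsq
    _ = Real.sqrt 2 * ‖latPt 1 ρ p‖ := by
        rw [Real.sqrt_mul (by norm_num), Real.sqrt_sq (norm_nonneg _)]

lemma one_le_max {p : ℤ × ℤ} (hp : p ≠ 0) : (1:ℝ) ≤ max |(p.1 : ℝ)| |(p.2 : ℝ)| := by
  by_cases h1 : p.1 = 0
  · have h2 : p.2 ≠ 0 := by
      intro h2; exact hp (Prod.ext h1 h2)
    have : (1:ℝ) ≤ |(p.2 : ℝ)| := by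
      rw [← Int.cast_abs]; exact_mod_cast Int.one_le_abs h2
    exact le_trans this (le_max_right _ _)
  · have : (1:ℝ) ≤ |(p.1 : ℝ)| := by
      rw [← Int.cast_abs]; exact_mod_cast Int.one_le_abs h1
    exact le_trans this (le_max_left _ _)

lemma sqrt2_le_two : Real.sqrt 2 ≤ 2 := by
  nlinarith [Real.sq_sqrt (show (0:ℝ) ≤ 2 by norm_num), Real.sqrt_nonneg 2]

lemma norm_latPt_lb (hre : ρ.re = 1/2) (him : ρ.im = Real.sqrt 3 / 2)
    {p : ℤ × ℤ} (hp : p ≠ 0) : (1:ℝ) ≤ 2 * ‖latPt 1 ρ p‖ := by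
  have h1 := one_le_max hp
  have h2 := max_le_norm hre him p
  nlinarith [sqrt2_le_two, Real.sqrt_nonneg 2, norm_nonneg (latPt 1 ρ p)]

lemma latPt_ne_zero (hre : ρ.re = 1/2) (him : ρ.im = Real.sqrt 3 / 2)
    {p : ℤ × ℤ} (hp : p ≠ 0) : latPt 1 ρ p ≠ 0 := by
  intro h
  have := norm_latPt_lb hre him hp
  rw [h] at this
  simp at this
  linarith

lemma one_add_norm_le (hre : ρ.re = 1/2) (him : ρ.im = Real.sqrt 3 / 2)
    {p : ℤ × ℤ} (hp : p ≠ 0) :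
    1 + ‖latPt 1 ρ p‖ ≤ 3 * ‖latPt 1 ρ p‖ := by
  have := norm_latPt_lb hre him hp
  linarith

/-- The basic summable majorant. -/
lemma summable_cube (hre : ρ.re = 1/2) (him : ρ.im = Real.sqrt 3 / 2) :
    Summable (fun p : ℤ × ℤ => ((1 + ‖latPt 1 ρ p‖)⁻¹) ^ 3) := by
  have h0 : Summable (fun x : Fin 2 → ℤ => ‖x‖ ^ (-(3:ℝ))) :=
    EisensteinSeries.summable_one_div_norm_rpow (by norm_num)
  have h1 : Summable (fun p : ℤ × ℤ =>
      (fun x : Fin 2 → ℤ => ‖x‖ ^ (-(3:ℝ))) ((finTwoArrowEquiv ℤ).symm p)) :=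
    ((finTwoArrowEquiv ℤ).symm.summable_iff).mpr h0
  apply Summable.of_norm_bounded_eventually
    (g := fun p : ℤ × ℤ => (Real.sqrt 2)^3 * ‖(finTwoArrowEquiv ℤ).symm p‖ ^ (-(3:ℝ)))
    (h1.mul_left _)
  have hfin : ∀ᶠ p : ℤ × ℤ in cofinite, p ≠ 0 := eventually_cofinite_ne 0
  filter_upwards [hfin] with p hp
  set M : ℝ := max |(p.1 : ℝ)| |(p.2 : ℝ)| with hMdef
  have hM : ‖(finTwoArrowEquiv ℤ).symm p‖ = M := by
    rw [EisensteinSeries.norm_eq_max_natAbs, hMdef]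
    simp [finTwoArrowEquiv, Nat.cast_max, Nat.cast_natAbs]
  have hM1 : (1:ℝ) ≤ M := one_le_max hp
  have hMpos : (0:ℝ) < M := lt_of_lt_of_le one_pos hM1
  have hrpow : ‖(finTwoArrowEquiv ℤ).symm p‖ ^ (-(3:ℝ)) = (M ^ 3)⁻¹ := by
    rw [hM, ← Real.rpow_natCast M 3, ← Real.rpow_neg (le_of_lt hMpos)]
    norm_num
  rw [hrpow]
  have hX : (0:ℝ) < 1 + ‖latPt 1 ρ p‖ := by positivity
  have hle : M ≤ Real.sqrt 2 * (1 + ‖latPt 1 ρ p‖) := by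
    have := max_le_norm hre him p
    nlinarith [Real.sqrt_nonneg 2]
  have hnn : ‖((1 + ‖latPt 1 ρ p‖)⁻¹) ^ 3‖ = ((1 + ‖latPt 1 ρ p‖)⁻¹) ^ 3 := by
    rw [Real.norm_of_nonneg]; positivity
  rw [hnn]
  have hstep : (1 + ‖latPt 1 ρ p‖)⁻¹ ≤ Real.sqrt 2 / M := by
    rw [le_div_iff₀ hMpos, inv_mul_le_iff₀ hX]
    linarith [hle]
  calc ((1 + ‖latPt 1 ρ p‖)⁻¹) ^ 3 ≤ (Real.sqrt 2 / M) ^ 3 :=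
        pow_le_pow_left₀ (by positivity) hstep 3
    _ = (Real.sqrt 2) ^ 3 * (M ^ 3)⁻¹ := by rw [div_pow]; ring

/-- Comparison against the cube majorant, subtype version. -/
lemma summable_of_cube_bound (hre : ρ.re = 1/2) (him : ρ.im = Real.sqrt 3 / 2)
    {F : {p : ℤ × ℤ // p ≠ 0} → ℂ} (C : ℝ)
    (h : ∀ p : {p : ℤ × ℤ // p ≠ 0}, ‖F p‖ ≤ C * ((1 + ‖latPt 1 ρ p.1‖)⁻¹) ^ 3) :
    Summable F := by
  apply Summable.of_norm_bounded (((summable_cube hre him).mul_left C).comp_injective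
    Subtype.val_injective) h

/-- Comparison against the cube majorant, full version. -/
lemma summable_of_cube_bound' (hre : ρ.re = 1/2) (him : ρ.im = Real.sqrt 3 / 2)
    {F : ℤ × ℤ → ℂ} (C : ℝ)
    (h : ∀ p : ℤ × ℤ, ‖F p‖ ≤ C * ((1 + ‖latPt 1 ρ p‖)⁻¹) ^ 3) :
    Summable F :=
  Summable.of_norm_bounded ((summable_cube hre him).mul_left C) h

/-- Uniform lower bound on distances to lattice points near a non-lattice point. -/
lemma ball_bound (hre : ρ.re = 1/2) (him : ρ.im = Real.sqrt 3 / 2)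
    {w : ℂ} (hw : w ∈ Dset ρ) :
    ∃ ε > 0, ∃ c > 0, ∀ z ∈ ball w ε, (‖z‖ ≤ ‖w‖ + 1 ∧
      ∀ p : ℤ × ℤ, c * (1 + ‖latPt 1 ρ p‖) ≤ ‖z - latPt 1 ρ p‖) := by
  set N : ℤ := ⌈Real.sqrt 2 * (‖w‖ + 2)⌉ with hNdef
  have hNge : Real.sqrt 2 * (‖w‖ + 2) ≤ (N : ℝ) := Int.le_ceil _
  set K : Finset (ℤ × ℤ) := Finset.Icc (-N) N ×ˢ Finset.Icc (-N) N with hKdef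
  have hN0 : 0 ≤ N := by
    have : (0:ℝ) ≤ Real.sqrt 2 * (‖w‖ + 2) := by positivity
    exact_mod_cast le_trans this hNge
  have h0K : (0,0) ∈ K := by
    simp only [hKdef, Finset.mem_product, Finset.mem_Icc]
    omega
  have hfar : ∀ p : ℤ × ℤ, p ∉ K → 2 ≤ ‖w - latPt 1 ρ p‖ := by
    intro p hp
    have hmax : (N:ℝ) + 1 ≤ max |(p.1 : ℝ)| |(p.2 : ℝ)| := by
      have : N + 1 ≤ |p.1| ∨ N + 1 ≤ |p.2| := by
        by_contra hcon
        push_neg at hcon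
        obtain ⟨h1, h2⟩ := hcon
        apply hp
        simp only [hKdef, Finset.mem_product, Finset.mem_Icc]
        have h1' := abs_le.1 (Int.lt_add_one_iff.1 h1)
        have h2' := abs_le.1 (Int.lt_add_one_iff.1 h2)
        exact ⟨⟨h1'.1, h1'.2⟩, ⟨h2'.1, h2'.2⟩⟩
      rcases this with h | h
      · refine le_trans ?_ (le_max_left _ _)
        rw [← Int.cast_abs]; exact_mod_cast h
      · refine le_trans ?_ (le_max_right _ _)
        rw [← Int.cast_abs]; exact_mod_cast h
    have h2 := max_le_norm hre him p
    have hs2 : (1:ℝ) ≤ Real.sqrt 2 := by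
      nlinarith [Real.sq_sqrt (show (0:ℝ) ≤ 2 by norm_num), Real.sqrt_nonneg 2]
    have hLlb : ‖w‖ + 2 ≤ ‖latPt 1 ρ p‖ := by
      have key : Real.sqrt 2 * (‖w‖ + 2) + 1 ≤ Real.sqrt 2 * ‖latPt 1 ρ p‖ := by linarith
      by_contra hcon
      push_neg at hcon
      have : Real.sqrt 2 * ‖latPt 1 ρ p‖ ≤ Real.sqrt 2 * (‖w‖ + 2) :=
        mul_le_mul_of_nonneg_left (le_of_lt hcon) (Real.sqrt_nonneg 2)
      linarith
    have h5 : ‖latPt 1 ρ p‖ - ‖w‖ ≤ ‖latPt 1 ρ p - w‖ := norm_sub_norm_le _ _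
    rw [norm_sub_rev] at h5
    linarith
  obtain ⟨p₀, _, hp₀min⟩ := Finset.exists_min_image K
    (fun p => ‖w - latPt 1 ρ p‖) ⟨(0,0), h0K⟩
  set δ₀ : ℝ := ‖w - latPt 1 ρ p₀‖ with hd0
  have hδ₀pos : 0 < δ₀ := by
    rw [hd0]
    exact norm_pos_iff.2 (sub_ne_zero.mpr (hw p₀))
  have hδ₀le : ∀ p ∈ K, δ₀ ≤ ‖w - latPt 1 ρ p‖ := hp₀min
  set δ : ℝ := min δ₀ 1 with hddef
  have hδpos : 0 < δ := lt_min hδ₀pos one_pos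
  have hδ1 : δ ≤ 1 := min_le_right _ _
  set Mb : ℝ := 2 * (‖w‖ + 2) with hMbdef
  refine ⟨δ/2, by positivity, min (4⁻¹) ((δ/2)/(1+Mb)), ?_, ?_⟩
  · apply lt_min (by norm_num)
    have : (0:ℝ) < 1 + Mb := by positivity
    positivity
  intro z hz
  rw [mem_ball, dist_eq_norm] at hz
  have hznorm : ‖z‖ ≤ ‖w‖ + 1 := by
    have := norm_add_le (z - w) w
    simp only [sub_add_cancel] at this
    linarith
  refine ⟨hznorm, ?_⟩
  intro p
  have hlow : δ/2 ≤ ‖z - latPt 1 ρ p‖ := by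
    by_cases hpK : p ∈ K
    · have h1 := hδ₀le p hpK
      have htri := norm_sub_le_norm_sub_add_norm_sub w z (latPt 1 ρ p)
      have : δ ≤ δ₀ := min_le_left _ _
      have hzw : ‖w - z‖ < δ/2 := by rwa [norm_sub_rev]
      linarith
    · have h1 := hfar p hpK
      have htri := norm_sub_le_norm_sub_add_norm_sub w z (latPt 1 ρ p)
      have hzw : ‖w - z‖ < δ/2 := by rwa [norm_sub_rev]
      linarith
  set X : ℝ := ‖latPt 1 ρ p‖ with hXdef
  have hX0 : 0 ≤ X := norm_nonneg _
  by_cases hcase : X ≤ Mb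
  · have hc1 : min (4⁻¹) ((δ/2)/(1+Mb)) ≤ (δ/2)/(1+Mb) := min_le_right _ _
    have hMb0 : (0:ℝ) < 1 + Mb := by positivity
    have : min (4⁻¹) ((δ/2)/(1+Mb)) * (1 + X) ≤ ((δ/2)/(1+Mb)) * (1 + Mb) := by
      apply mul_le_mul hc1 (by linarith) (by linarith) (by positivity)
    rw [div_mul_cancel₀ _ (ne_of_gt hMb0)] at this
    linarith
  · push_neg at hcase
    have hc1 : min (4⁻¹) ((δ/2)/(1+Mb)) ≤ 4⁻¹ := min_le_left _ _
    have hc0 : 0 ≤ min (4⁻¹) ((δ/2)/(1+Mb)) := by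
      have : (0:ℝ) < 1 + Mb := by positivity
      positivity
    have htri : X - ‖z‖ ≤ ‖z - latPt 1 ρ p‖ := by
      have h6 := norm_sub_norm_le (latPt 1 ρ p) z
      rw [norm_sub_rev] at h6
      exact h6
    have hub : X - (‖w‖ + 1) ≤ ‖z - latPt 1 ρ p‖ := by linarith
    have hw0 : (0:ℝ) ≤ ‖w‖ := norm_nonneg _
    nlinarith [mul_le_mul_of_nonneg_right hc1 (show (0:ℝ) ≤ 1 + X by linarith)]

lemma Dset_open (hre : ρ.re = 1/2) (him : ρ.im = Real.sqrt 3 / 2) : IsOpen (Dset ρ) := by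
  rw [Metric.isOpen_iff]
  intro w hw
  obtain ⟨ε, hε, c, hc, hb⟩ := ball_bound hre him hw
  refine ⟨ε, hε, fun z hz p heq => ?_⟩
  have := (hb z hz).2 p
  rw [heq, sub_self] at this
  simp only [norm_zero] at this
  nlinarith [norm_nonneg (latPt 1 ρ p)]

lemma Dset_preconnected : IsPreconnected (Dset ρ) := by
  have heq : Dset ρ = (Set.range (latPt 1 ρ))ᶜ := by
    ext z
    simp only [Dset, Set.mem_setOf_eq, Set.mem_compl_iff, Set.mem_range, not_exists]
    exact ⟨fun h p hp => h p hp.symm, fun h p hp => h p hp.symm⟩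
  rw [heq]
  exact ((Set.countable_range _).isConnected_compl_of_one_lt_rank
    (by rw [Complex.rank_real_complex]; norm_num)).isPreconnected

/-- A function with vanishing derivative on an open preconnected set is constant. -/
lemma const_of_deriv {s : Set ℂ} (ho : IsOpen s) (hpc : IsPreconnected s) (F : ℂ → ℂ)
    (hF : ∀ x ∈ s, HasDerivAt F 0 x) {x y : ℂ} (hx : x ∈ s) (hy : y ∈ s) : F x = F y := by
  have loc : ∀ z ∈ s, ∃ r > 0, ball z r ⊆ s ∧ ∀ u ∈ ball z r, F u = F z := by
    intro z hz
    obtain ⟨r, hr, hsub⟩ := Metric.isOpen_iff.1 ho z hz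
    refine ⟨r, hr, hsub, fun u hu => ?_⟩
    have hb := Convex.norm_image_sub_le_of_norm_hasDerivWithin_le
      (f := F) (f' := fun _ => (0:ℂ)) (s := ball z r) (C := 0)
      (fun a ha => (hF a (hsub ha)).hasDerivWithinAt) (fun a _ => by simp)
      (convex_ball z r) (mem_ball_self hr) hu
    rw [zero_mul] at hb
    have : F u - F z = 0 := norm_le_zero_iff.1 hb
    exact sub_eq_zero.1 this
  by_contra hne
  choose! r hr hsub hconst using loc
  set u : Set ℂ := ⋃ (z : ℂ) (_ : z ∈ s ∧ F z = F x), ball z (r z) with hudef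
  set v : Set ℂ := ⋃ (z : ℂ) (_ : z ∈ s ∧ F z ≠ F x), ball z (r z) with hvdef
  have hou : IsOpen u := isOpen_iUnion fun z => isOpen_iUnion fun _ => isOpen_ball
  have hov : IsOpen v := isOpen_iUnion fun z => isOpen_iUnion fun _ => isOpen_ball
  have hcov : s ⊆ u ∪ v := by
    intro z hz
    by_cases hFz : F z = F x
    · exact Or.inl (Set.mem_iUnion₂.2 ⟨z, ⟨hz, hFz⟩, mem_ball_self (hr z hz)⟩)
    · exact Or.inr (Set.mem_iUnion₂.2 ⟨z, ⟨hz, hFz⟩, mem_ball_self (hr z hz)⟩)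
  have hxu : (s ∩ u).Nonempty :=
    ⟨x, hx, Set.mem_iUnion₂.2 ⟨x, ⟨hx, rfl⟩, mem_ball_self (hr x hx)⟩⟩
  have hyv : (s ∩ v).Nonempty :=
    ⟨y, hy, Set.mem_iUnion₂.2 ⟨y, ⟨hy, fun h => hne h.symm⟩, mem_ball_self (hr y hy)⟩⟩
  obtain ⟨z, _, hzu, hzv⟩ := hpc u v hou hov hcov hxu hyv
  obtain ⟨a, ⟨has, hfa⟩, hza⟩ := Set.mem_iUnion₂.1 hzu
  obtain ⟨b, ⟨hbs, hfb⟩, hzb⟩ := Set.mem_iUnion₂.1 hzv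
  have h1 : F z = F a := hconst a has z hza
  have h2 : F z = F b := hconst b hbs z hzb
  exact hfb (by rw [← h2, h1, hfa])

/-- Split off the `0`-term of a full lattice sum. -/
lemma tsum_split (F : ℤ × ℤ → ℂ) (h : Summable F) :
    ∑' p : ℤ × ℤ, F p = F 0 + ∑' p : {p : ℤ × ℤ // p ≠ 0}, F p.1 := by
  classical
  rw [Summable.tsum_eq_add_tsum_ite h 0]
  congr 1
  have hsupp : Function.support (fun n : ℤ × ℤ => if n = 0 then 0 else F n)
      ⊆ {p : ℤ × ℤ | p ≠ 0} := by
    intro n hn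
    simp only [Function.mem_support] at hn
    intro h0
    rw [h0] at hn
    simp at hn
  have := tsum_subtype_eq_of_support_subset hsupp
  rw [← this]
  exact (tsum_congr fun p => by
    simp only [if_neg (show p.1 ≠ 0 from p.2)]).symm

/-- Negation as an equivalence of nonzero index pairs. -/
def negE : {p : ℤ × ℤ // p ≠ 0} ≃ {p : ℤ × ℤ // p ≠ 0} where
  toFun p := ⟨-p.1, by simp [p.2]⟩
  invFun p := ⟨-p.1, by simp [p.2]⟩
  left_inv p := Subtype.ext (by simp)
  right_inv p := Subtype.ext (by simp)

/-- Rotation (multiplication by `ρ`) as an equivalence of nonzero index pairs. -/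
def rotE : {p : ℤ × ℤ // p ≠ 0} ≃ {p : ℤ × ℤ // p ≠ 0} where
  toFun p := ⟨(-p.1.2, p.1.1 + p.1.2), by
    rcases p with ⟨⟨m, n⟩, h⟩
    simp only [ne_eq, Prod.ext_iff, Prod.fst_zero, Prod.snd_zero] at h ⊢
    omega⟩
  invFun p := ⟨(p.1.1 + p.1.2, -p.1.1), by
    rcases p with ⟨⟨m, n⟩, h⟩
    simp only [ne_eq, Prod.ext_iff, Prod.fst_zero, Prod.snd_zero] at h ⊢
    omega⟩
  left_inv p := Subtype.ext (by
    rcases p with ⟨⟨m, n⟩, h⟩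
    simp only [Prod.ext_iff]
    constructor <;> ring)
  right_inv p := Subtype.ext (by
    rcases p with ⟨⟨m, n⟩, h⟩
    simp only [Prod.ext_iff]
    constructor <;> ring)

lemma latPt_rotE (hρ2 : ρ^2 = ρ - 1) (p : {p : ℤ × ℤ // p ≠ 0}) :
    latPt 1 ρ (rotE p).1 = ρ * latPt 1 ρ p.1 := by
  rcases p with ⟨⟨m, n⟩, h⟩
  simp only [rotE, Equiv.coe_fn_mk, latPt_def]
  push_cast
  linear_combination -(n : ℂ) * hρ2

lemma wzeta_neg (z : ℂ) : wzeta 1 ρ (-z) = -wzeta 1 ρ z := by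
  unfold wzeta
  have h1 : 1/(-z) = -(1/z) := by rw [one_div, one_div, inv_neg]
  rw [h1, neg_add]
  congr 1
  rw [← tsum_neg]
  rw [← Equiv.tsum_eq negE (fun p : {p : ℤ × ℤ // p ≠ 0} =>
    1/(-z - latPt 1 ρ p.1) + 1/latPt 1 ρ p.1 + (-z)/(latPt 1 ρ p.1)^2)]
  apply tsum_congr
  intro p
  have hL : latPt 1 ρ (negE p).1 = -latPt 1 ρ p.1 := latPt_neg ρ p.1
  simp only [hL]
  have h2 : -z - -latPt 1 ρ p.1 = -(z - latPt 1 ρ p.1) := by ring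
  rw [h2]
  simp only [one_div, inv_neg, neg_div, neg_sq]
  ring

lemma wp_even (z : ℂ) : wp 1 ρ (-z) = wp 1 ρ z := by
  unfold wp
  rw [neg_sq]
  congr 1
  rw [← Equiv.tsum_eq negE (fun p : {p : ℤ × ℤ // p ≠ 0} =>
    1/(-z - latPt 1 ρ p.1)^2 - 1/(latPt 1 ρ p.1)^2)]
  apply tsum_congr
  intro p
  have hL : latPt 1 ρ (negE p).1 = -latPt 1 ρ p.1 := latPt_neg ρ p.1
  simp only [hL]
  have h2 : -z - -latPt 1 ρ p.1 = -(z - latPt 1 ρ p.1) := by ring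
  rw [h2, neg_sq, neg_sq]

lemma rot_term (hρ0 : ρ ≠ 0) (z a : ℂ) :
    1/(ρ*z - ρ*a) + 1/(ρ*a) + (ρ*z)/(ρ*a)^2
      = ρ⁻¹ * (1/(z - a) + 1/a + z/a^2) := by
  have h1 : ρ*z - ρ*a = ρ*(z-a) := by ring
  simp only [h1, one_div, mul_inv, mul_pow, div_eq_mul_inv]
  have hc : ρ * (ρ^2)⁻¹ = ρ⁻¹ := by
    rw [sq, mul_inv, ← mul_assoc, mul_inv_cancel₀ hρ0, one_mul]
  linear_combination (z * (a^2)⁻¹) * hc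

lemma wzeta_rot (hρ2 : ρ^2 = ρ - 1) (hre : ρ.re = 1/2) (him : ρ.im = Real.sqrt 3 / 2)
    (hρ0 : ρ ≠ 0) (z : ℂ) :
    wzeta 1 ρ (ρ * z) = ρ⁻¹ * wzeta 1 ρ z := by
  unfold wzeta
  rw [mul_add]
  congr 1
  · rw [one_div, one_div, mul_inv]
  · rw [← Equiv.tsum_eq rotE (fun p : {p : ℤ × ℤ // p ≠ 0} =>
      1/(ρ*z - latPt 1 ρ p.1) + 1/latPt 1 ρ p.1 + (ρ*z)/(latPt 1 ρ p.1)^2),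
      ← tsum_mul_left]
    apply tsum_congr
    intro p
    rw [latPt_rotE hρ2 p]
    exact rot_term hρ0 z (latPt 1 ρ p.1)

lemma S3_shift (z : ℂ) (q : ℤ × ℤ) : S3 ρ (z + latPt 1 ρ q) = S3 ρ z := by
  unfold S3
  rw [← Equiv.tsum_eq (Equiv.addRight q)
    (fun p : ℤ × ℤ => 1/(z + latPt 1 ρ q - latPt 1 ρ p)^3)]
  apply tsum_congr
  intro p
  have h1 : (Equiv.addRight q) p = p + q := rfl
  rw [h1, latPt_add]
  have h2 : z + latPt 1 ρ q - (latPt 1 ρ p + latPt 1 ρ q) = z - latPt 1 ρ p := by ring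
  rw [h2]

lemma Dset_add {z : ℂ} (hz : z ∈ Dset ρ) (q : ℤ × ℤ) : z + latPt 1 ρ q ∈ Dset ρ := by
  intro p h
  apply hz (p - q)
  rw [latPt_sub]
  linear_combination h

lemma zeta_hasDerivAt (hre : ρ.re = 1/2) (him : ρ.im = Real.sqrt 3 / 2)
    {w : ℂ} (hw : w ∈ Dset ρ) :
    HasDerivAt (wzeta 1 ρ) (-(wp 1 ρ w)) w := by
  obtain ⟨ε, hε, c, hc, hb⟩ := ball_bound hre him hw
  have hwball : w ∈ ball w ε := mem_ball_self hε
  have hzD : ∀ z ∈ ball w ε, ∀ p : ℤ × ℤ, z ≠ latPt 1 ρ p := by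
    intro z hz p heq
    have h1 := (hb z hz).2 p
    rw [heq, sub_self] at h1
    simp only [norm_zero] at h1
    nlinarith [norm_nonneg (latPt 1 ρ p)]
  have key : ∀ (p : {p : ℤ × ℤ // p ≠ 0}), ∀ z ∈ ball w ε,
      ‖-(1/(z - latPt 1 ρ p.1)^2) + 1/(latPt 1 ρ p.1)^2‖
        ≤ (9 * (‖w‖+1) * (‖w‖+3) / c^2) * ((1 + ‖latPt 1 ρ p.1‖)⁻¹)^3 := by
    intro p z hz
    set a : ℂ := latPt 1 ρ p.1 with ha'
    have hX1 : (0:ℝ) < 1 + ‖a‖ := by positivity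
    have ha : a ≠ 0 := by
      have := latPt_ne_zero hre him p.2
      rwa [← ha'] at this
    have hza : z ≠ a := by
      have := hzD z hz p.1
      rwa [← ha'] at this
    have hza' : z - a ≠ 0 := sub_ne_zero.mpr hza
    have hid : -(1/(z-a)^2) + 1/a^2 = z*(z-2*a)/(a^2*(z-a)^2) := by
      field_simp
      ring
    rw [hid, norm_div, norm_mul, norm_mul, norm_pow, norm_pow]
    have h2 : (1+‖a‖)/3 ≤ ‖a‖ := by
      have h := one_add_norm_le hre him p.2
      rw [← ha'] at h
      linarith
    have h3 : c*(1+‖a‖) ≤ ‖z-a‖ := by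
      have h := (hb z hz).2 p.1
      rwa [← ha'] at h
    have hz1 : ‖z‖ ≤ ‖w‖+1 := (hb z hz).1
    have h4 : ‖z - 2*a‖ ≤ (‖w‖+3)*(1+‖a‖) := by
      have ht := norm_sub_le z (2*a)
      have h2a : ‖(2:ℂ)*a‖ = 2*‖a‖ := by
        rw [norm_mul]
        norm_num
      rw [h2a] at ht
      nlinarith [norm_nonneg w, norm_nonneg a]
    have hden : (0:ℝ) < ((1+‖a‖)/3)^2*(c*(1+‖a‖))^2 := by positivity
    calc ‖z‖*‖z-2*a‖/(‖a‖^2*‖z-a‖^2)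
        ≤ ((‖w‖+1)*((‖w‖+3)*(1+‖a‖)))/(((1+‖a‖)/3)^2*(c*(1+‖a‖))^2) := by
          apply div_le_div₀ (by positivity)
            (mul_le_mul hz1 h4 (norm_nonneg _) (by positivity)) hden
          apply mul_le_mul (pow_le_pow_left₀ (by positivity) h2 2)
            (pow_le_pow_left₀ (by positivity) h3 2) (by positivity) (by positivity)
      _ = (9 * (‖w‖+1) * (‖w‖+3) / c^2) * ((1+‖a‖)⁻¹)^3 := by
          field_simp
          ring
  have hu : Summable (fun p : {p : ℤ × ℤ // p ≠ 0} =>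
      (9 * (‖w‖+1) * (‖w‖+3) / c^2) * ((1 + ‖latPt 1 ρ p.1‖)⁻¹)^3) :=
    ((summable_cube hre him).mul_left _).comp_injective Subtype.val_injective
  have hgderiv : ∀ (p : {p : ℤ × ℤ // p ≠ 0}), ∀ z ∈ ball w ε,
      HasDerivAt (fun z : ℂ => 1/(z - latPt 1 ρ p.1) + 1/latPt 1 ρ p.1
        + z/(latPt 1 ρ p.1)^2)
        (-(1/(z - latPt 1 ρ p.1)^2) + 1/(latPt 1 ρ p.1)^2) z := by
    intro p z hz
    have hza' : z - latPt 1 ρ p.1 ≠ 0 := sub_ne_zero.mpr (hzD z hz p.1)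
    have h1 : HasDerivAt (fun y : ℂ => y - latPt 1 ρ p.1) 1 z :=
      (hasDerivAt_id z).sub_const _
    have h2 := h1.inv hza'
    have h3 : HasDerivAt (fun y : ℂ => 1/(y - latPt 1 ρ p.1))
        (-(1/(z - latPt 1 ρ p.1)^2)) z := by
      simp only [one_div]
      rw [neg_div, one_div] at h2
      exact h2
    have h4 := h3.add_const (1/latPt 1 ρ p.1)
    have h5 : HasDerivAt (fun y : ℂ => y / (latPt 1 ρ p.1)^2)
        (1/(latPt 1 ρ p.1)^2) z := by
      have h6 := (hasDerivAt_id z).div_const ((latPt 1 ρ p.1)^2)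
      simpa [one_div] using h6
    exact h4.add h5
  have hg0 : Summable (fun p : {p : ℤ × ℤ // p ≠ 0} =>
      1/(w - latPt 1 ρ p.1) + 1/latPt 1 ρ p.1 + w/(latPt 1 ρ p.1)^2) := by
    apply summable_of_cube_bound hre him (9 * ‖w‖^2 / c)
    intro p
    set a : ℂ := latPt 1 ρ p.1 with ha'
    have hX1 : (0:ℝ) < 1 + ‖a‖ := by positivity
    have ha : a ≠ 0 := by
      have := latPt_ne_zero hre him p.2
      rwa [← ha'] at this
    have hza : w ≠ a := by
      have := hw p.1
      rwa [← ha'] at this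
    have hza' : w - a ≠ 0 := sub_ne_zero.mpr hza
    have hid : 1/(w-a) + 1/a + w/a^2 = w^2/((w-a)*a^2) := by
      field_simp
      ring
    rw [hid, norm_div, norm_mul, norm_pow, norm_pow]
    have h2 : (1+‖a‖)/3 ≤ ‖a‖ := by
      have h := one_add_norm_le hre him p.2
      rw [← ha'] at h
      linarith
    have h3 : c*(1+‖a‖) ≤ ‖w-a‖ := by
      have h := (hb w hwball).2 p.1
      rwa [← ha'] at h
    have hden : (0:ℝ) < (c*(1+‖a‖))*((1+‖a‖)/3)^2 := by positivity
    calc ‖w‖^2/(‖w-a‖*‖a‖^2)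
        ≤ ‖w‖^2/((c*(1+‖a‖))*((1+‖a‖)/3)^2) := by
          apply div_le_div₀ (by positivity) le_rfl hden
          apply mul_le_mul h3 (pow_le_pow_left₀ (by positivity) h2 2)
            (by positivity) (by positivity)
      _ = (9 * ‖w‖^2 / c) * ((1+‖a‖)⁻¹)^3 := by
          field_simp
          ring
  have hsum := hasDerivAt_tsum_of_isPreconnected hu isOpen_ball
    (convex_ball w ε).isPreconnected hgderiv key hwball hg0 hwball
  have hw0 : w ≠ 0 := by
    have := hw 0
    rwa [latPt_zero] at this
  have hhead : HasDerivAt (fun z : ℂ => 1/z) (-(1/w^2)) w := by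
    simp only [one_div]
    exact hasDerivAt_inv hw0
  have htotal := hhead.add hsum
  have hfun : (fun z : ℂ => 1/z + ∑' p : {p : ℤ × ℤ // p ≠ 0},
      (1/(z - latPt 1 ρ p.1) + 1/latPt 1 ρ p.1 + z/(latPt 1 ρ p.1)^2)) = wzeta 1 ρ := rfl
  replace htotal : HasDerivAt (wzeta 1 ρ) _ w := htotal
  convert htotal using 1
  unfold wp
  have hneg : ∑' p : {p : ℤ × ℤ // p ≠ 0},
      (-(1/(w - latPt 1 ρ p.1)^2) + 1/(latPt 1 ρ p.1)^2)
      = -∑' p : {p : ℤ × ℤ // p ≠ 0},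
      (1/(w - latPt 1 ρ p.1)^2 - 1/(latPt 1 ρ p.1)^2) := by
    rw [← tsum_neg]
    exact tsum_congr fun p => by ring
  rw [hneg]
  ring

lemma wp_hasDerivAt (hre : ρ.re = 1/2) (him : ρ.im = Real.sqrt 3 / 2)
    {w : ℂ} (hw : w ∈ Dset ρ) :
    HasDerivAt (wp 1 ρ) (-2 * S3 ρ w) w := by
  obtain ⟨ε, hε, c, hc, hb⟩ := ball_bound hre him hw
  have hwball : w ∈ ball w ε := mem_ball_self hε
  have hzD : ∀ z ∈ ball w ε, ∀ p : ℤ × ℤ, z ≠ latPt 1 ρ p := by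
    intro z hz p heq
    have h1 := (hb z hz).2 p
    rw [heq, sub_self] at h1
    simp only [norm_zero] at h1
    nlinarith [norm_nonneg (latPt 1 ρ p)]
  have key : ∀ (p : {p : ℤ × ℤ // p ≠ 0}), ∀ z ∈ ball w ε,
      ‖-(2/(z - latPt 1 ρ p.1)^3)‖ ≤ (2/c^3) * ((1 + ‖latPt 1 ρ p.1‖)⁻¹)^3 := by
    intro p z hz
    set a : ℂ := latPt 1 ρ p.1 with ha'
    have hX1 : (0:ℝ) < 1 + ‖a‖ := by positivity
    have h3 : c*(1+‖a‖) ≤ ‖z-a‖ := by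
      have h := (hb z hz).2 p.1
      rwa [← ha'] at h
    rw [norm_neg, norm_div, norm_pow]
    have h2n : ‖(2:ℂ)‖ = 2 := by norm_num
    rw [h2n]
    have hden : (0:ℝ) < (c*(1+‖a‖))^3 := by positivity
    calc (2:ℝ)/‖z-a‖^3 ≤ 2/(c*(1+‖a‖))^3 := by
          apply div_le_div₀ (by norm_num) le_rfl hden
          exact pow_le_pow_left₀ (by positivity) h3 3
      _ = (2/c^3) * ((1+‖a‖)⁻¹)^3 := by
          field_simp
  have hu : Summable (fun p : {p : ℤ × ℤ // p ≠ 0} =>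
      (2/c^3) * ((1 + ‖latPt 1 ρ p.1‖)⁻¹)^3) :=
    ((summable_cube hre him).mul_left _).comp_injective Subtype.val_injective
  have hgderiv : ∀ (p : {p : ℤ × ℤ // p ≠ 0}), ∀ z ∈ ball w ε,
      HasDerivAt (fun z : ℂ => 1/(z - latPt 1 ρ p.1)^2 - 1/(latPt 1 ρ p.1)^2)
        (-(2/(z - latPt 1 ρ p.1)^3)) z := by
    intro p z hz
    have hza' : z - latPt 1 ρ p.1 ≠ 0 := sub_ne_zero.mpr (hzD z hz p.1)
    have h1 : HasDerivAt (fun y : ℂ => (y - latPt 1 ρ p.1)^2)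
        (2*(z - latPt 1 ρ p.1)) z := by
      have h0 := ((hasDerivAt_id z).sub_const (latPt 1 ρ p.1)).pow 2
      norm_num at h0
      exact h0
    have h2 := h1.inv (pow_ne_zero 2 hza')
    have h3 : HasDerivAt (fun y : ℂ => 1/(y - latPt 1 ρ p.1)^2)
        (-(2/(z - latPt 1 ρ p.1)^3)) z := by
      simp only [one_div]
      rw [show -(2/(z - latPt 1 ρ p.1)^3) = -(2*(z - latPt 1 ρ p.1))/((z - latPt 1 ρ p.1)^2)^2 by
        field_simp]
      exact h2
    exact h3.sub_const _
  have hg0 : Summable (fun p : {p : ℤ × ℤ // p ≠ 0} =>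
      1/(w - latPt 1 ρ p.1)^2 - 1/(latPt 1 ρ p.1)^2) := by
    apply summable_of_cube_bound hre him (9 * ((‖w‖+1)*(‖w‖+3)) / c^2)
    intro p
    set a : ℂ := latPt 1 ρ p.1 with ha'
    have hX1 : (0:ℝ) < 1 + ‖a‖ := by positivity
    have ha : a ≠ 0 := by
      have := latPt_ne_zero hre him p.2
      rwa [← ha'] at this
    have hza : w ≠ a := by
      have := hw p.1
      rwa [← ha'] at this
    have hza' : w - a ≠ 0 := sub_ne_zero.mpr hza
    have hid : 1/(w-a)^2 - 1/a^2 = w*(2*a-w)/(a^2*(w-a)^2) := by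
      field_simp
      ring
    rw [hid, norm_div, norm_mul, norm_mul, norm_pow, norm_pow]
    have h2 : (1+‖a‖)/3 ≤ ‖a‖ := by
      have h := one_add_norm_le hre him p.2
      rw [← ha'] at h
      linarith
    have h3 : c*(1+‖a‖) ≤ ‖w-a‖ := by
      have h := (hb w hwball).2 p.1
      rwa [← ha'] at h
    have hz1 : ‖w‖ ≤ ‖w‖+1 := by linarith
    have h4 : ‖2*a - w‖ ≤ (‖w‖+3)*(1+‖a‖) := by
      have ht := norm_sub_le (2*a) w
      have h2a : ‖(2:ℂ)*a‖ = 2*‖a‖ := by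
        rw [norm_mul]
        norm_num
      rw [h2a] at ht
      nlinarith [norm_nonneg w, norm_nonneg a]
    have hden : (0:ℝ) < ((1+‖a‖)/3)^2*(c*(1+‖a‖))^2 := by positivity
    calc ‖w‖*‖2*a-w‖/(‖a‖^2*‖w-a‖^2)
        ≤ ((‖w‖+1)*((‖w‖+3)*(1+‖a‖)))/(((1+‖a‖)/3)^2*(c*(1+‖a‖))^2) := by
          apply div_le_div₀ (by positivity)
            (mul_le_mul hz1 h4 (norm_nonneg _) (by positivity)) hden
          apply mul_le_mul (pow_le_pow_left₀ (by positivity) h2 2)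
            (pow_le_pow_left₀ (by positivity) h3 2) (by positivity) (by positivity)
      _ = (9 * ((‖w‖+1)*(‖w‖+3)) / c^2) * ((1+‖a‖)⁻¹)^3 := by
          field_simp
          ring
  have hsum := hasDerivAt_tsum_of_isPreconnected hu isOpen_ball
    (convex_ball w ε).isPreconnected hgderiv key hwball hg0 hwball
  have hw0 : w ≠ 0 := by
    have := hw 0
    rwa [latPt_zero] at this
  have hhead : HasDerivAt (fun z : ℂ => 1/z^2) (-(2/w^3)) w := by
    have h1 : HasDerivAt (fun y : ℂ => y^2) (2*w) w := by
      have h0 := (hasDerivAt_id w).pow 2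
      norm_num at h0
      exact h0
    have h2 := h1.inv (pow_ne_zero 2 hw0)
    simp only [one_div]
    rw [show -(2/w^3) = -(2*w)/(w^2)^2 by
      field_simp]
    exact h2
  have htotal := hhead.add hsum
  have hfun : (fun z : ℂ => 1/z^2 + ∑' p : {p : ℤ × ℤ // p ≠ 0},
      (1/(z - latPt 1 ρ p.1)^2 - 1/(latPt 1 ρ p.1)^2)) = wp 1 ρ := rfl
  replace htotal : HasDerivAt (wp 1 ρ) _ w := htotal
  convert htotal using 1
  have hsummable : Summable (fun p : ℤ × ℤ => 1/(w - latPt 1 ρ p)^3) := by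
    apply summable_of_cube_bound' hre him (1/c^3)
    intro p
    have hX1 : (0:ℝ) < 1 + ‖latPt 1 ρ p‖ := by positivity
    have h3 : c*(1+‖latPt 1 ρ p‖) ≤ ‖w - latPt 1 ρ p‖ := (hb w hwball).2 p
    rw [norm_div, norm_pow, norm_one]
    have hden : (0:ℝ) < (c*(1+‖latPt 1 ρ p‖))^3 := by positivity
    calc (1:ℝ)/‖w - latPt 1 ρ p‖^3 ≤ 1/(c*(1+‖latPt 1 ρ p‖))^3 := by
          apply div_le_div₀ (by norm_num) le_rfl hden
          exact pow_le_pow_left₀ (by positivity) h3 3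
      _ = (1/c^3) * ((1+‖latPt 1 ρ p‖)⁻¹)^3 := by
          field_simp
  rw [show S3 ρ w = ∑' p : ℤ × ℤ, 1/(w - latPt 1 ρ p)^3 from rfl,
    tsum_split _ hsummable, latPt_zero]
  have hstep : ∑' p : {p : ℤ × ℤ // p ≠ 0}, (-(2/(w - latPt 1 ρ p.1)^3))
      = (-2) * ∑' p : {p : ℤ × ℤ // p ≠ 0}, 1/(w - latPt 1 ρ p.1)^3 := by
    rw [← tsum_mul_left]
    apply tsum_congr
    intro p
    rw [mul_one_div, neg_div]
  rw [hstep]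
  have hw3 : -(2/w^3) = -2 * (1/(w - 0)^3) := by
    rw [sub_zero, mul_one_div, neg_div]
  rw [hw3]
  ring

lemma quasi (hre : ρ.re = 1/2) (him : ρ.im = Real.sqrt 3 / 2) (q : ℤ × ℤ)
    (hhalf : -(latPt 1 ρ q / 2) ∈ Dset ρ) {z : ℂ} (hz : z ∈ Dset ρ) :
    wzeta 1 ρ (z + latPt 1 ρ q) = wzeta 1 ρ z + 2 * wzeta 1 ρ (latPt 1 ρ q / 2) := by
  set lam := latPt 1 ρ q with hlam
  have hwp : ∀ x ∈ Dset ρ, wp 1 ρ (x + lam) = wp 1 ρ x := by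
    intro x hx
    have hW : ∀ y ∈ Dset ρ, HasDerivAt (fun t => wp 1 ρ (t + lam) - wp 1 ρ t) 0 y := by
      intro y hy
      have hy2 : y + lam ∈ Dset ρ := Dset_add hy q
      have h1 : HasDerivAt (fun t : ℂ => wp 1 ρ (t + lam)) (-2 * S3 ρ (y + lam)) y := by
        have hcomp := (wp_hasDerivAt hre him hy2).comp y ((hasDerivAt_id y).add_const lam)
        simp [Function.comp] at hcomp ⊢
        exact hcomp
      have h2 := wp_hasDerivAt hre him hy
      have h3 := h1.sub h2
      have h4 : S3 ρ (y + lam) = S3 ρ y := S3_shift y q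
      rw [h4, sub_self] at h3
      exact h3
    have hconst := const_of_deriv (Dset_open hre him) Dset_preconnected _ hW hx hhalf
    have heval : wp 1 ρ (-(lam/2) + lam) - wp 1 ρ (-(lam/2)) = 0 := by
      have e1 : -(lam/2) + lam = lam/2 := by ring
      rw [e1, wp_even]
      ring
    rw [heval] at hconst
    linear_combination hconst
  have hV : ∀ y ∈ Dset ρ, HasDerivAt (fun t => wzeta 1 ρ (t + lam) - wzeta 1 ρ t) 0 y := by
    intro y hy
    have hy2 : y + lam ∈ Dset ρ := Dset_add hy q
    have h1 : HasDerivAt (fun t : ℂ => wzeta 1 ρ (t + lam)) (-(wp 1 ρ (y + lam))) y := by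
      have hcomp := (zeta_hasDerivAt hre him hy2).comp y ((hasDerivAt_id y).add_const lam)
      simp [Function.comp] at hcomp ⊢
      exact hcomp
    have h2 := zeta_hasDerivAt hre him hy
    have h3 := h1.sub h2
    rw [hwp y hy, sub_self] at h3
    exact h3
  have hconst := const_of_deriv (Dset_open hre him) Dset_preconnected _ hV hz hhalf
  have heval : wzeta 1 ρ (-(lam/2) + lam) - wzeta 1 ρ (-(lam/2))
      = 2 * wzeta 1 ρ (lam/2) := by
    have e1 : -(lam/2) + lam = lam/2 := by ring
    rw [e1, wzeta_neg]
    ring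
  rw [heval] at hconst
  linear_combination hconst

lemma div_two_im (w : ℂ) : (w/2).im = w.im/2 := by
  rw [Complex.div_im]
  simp [Complex.normSq_apply]
  ring

lemma div_three_im (w : ℂ) : (w/3).im = w.im/3 := by
  rw [Complex.div_im]
  simp [Complex.normSq_apply]
  ring

lemma mem_half (hre : ρ.re = 1/2) (him : ρ.im = Real.sqrt 3 / 2) :
    -((1:ℂ)/2) ∈ Dset ρ := by
  intro p h
  have h1 := congrArg Complex.im h
  rw [latPt_im him] at h1
  have hL : (-((1:ℂ)/2)).im = 0 := by simp
  rw [hL] at h1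
  have hp2 : (p.2 : ℝ) = 0 := by
    rcases mul_eq_zero.1 h1.symm with h' | h'
    · exact h'
    · exfalso
      nlinarith [sqrt3_pos]
  have hp2' : p.2 = 0 := by exact_mod_cast hp2
  have h2 := congrArg Complex.re h
  rw [latPt_re hre] at h2
  have hR : (-((1:ℂ)/2)).re = -(1/2) := by simp
  rw [hR, hp2'] at h2
  have : ((2 * p.1 : ℤ) : ℝ) = -1 := by
    push_cast
    push_cast at h2
    linarith
  have : (2 * p.1 : ℤ) = -1 := by exact_mod_cast this
  omega

lemma mem_z01 (hre : ρ.re = 1/2) (him : ρ.im = Real.sqrt 3 / 2) :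
    (1+ρ)/3 - 1 ∈ Dset ρ := by
  intro p h
  have h1 := congrArg Complex.im h
  rw [latPt_im him] at h1
  have hL : ((1+ρ)/3 - 1 : ℂ).im = Real.sqrt 3/6 := by
    rw [Complex.sub_im, div_three_im, Complex.add_im, Complex.one_im, him]
    ring
  rw [hL] at h1
  have hp2 : (p.2 : ℝ) = 1/3 := by
    have hs := sqrt3_pos
    have h2 : (p.2 : ℝ) * Real.sqrt 3 = (1/3) * Real.sqrt 3 := by
      ring_nf at h1 ⊢
      linarith
    exact mul_right_cancel₀ (ne_of_gt hs) h2
  have : ((3 * p.2 : ℤ) : ℝ) = 1 := by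
    push_cast
    linarith
  have : (3 * p.2 : ℤ) = 1 := by exact_mod_cast this
  omega

end Stmt11Aux

open Stmt11Aux in
theorem stmt11 (ρ : ℂ) (hρ : ρ = Complex.exp (Real.pi * Complex.I / 3)) :
    wzeta 1 ρ ((1 + ρ) / 3) = (eta1 ρ + eta2 ρ) / 3 ∧
    heckeZ (1 / 3) (1 / 3) ρ = 0 := by
  have hπ : (Real.pi : ℂ) * Complex.I / 3 = ((Real.pi/3 : ℝ) : ℂ) * Complex.I := by
    push_cast
    ring
  have hρ' : ρ = ((1/2 : ℝ) : ℂ) + ((Real.sqrt 3/2 : ℝ) : ℂ) * Complex.I := by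
    rw [hρ, hπ, Complex.exp_mul_I, ← Complex.ofReal_cos, ← Complex.ofReal_sin,
      Real.cos_pi_div_three, Real.sin_pi_div_three]
  have hre : ρ.re = 1/2 := by rw [hρ']; simp
  have him : ρ.im = Real.sqrt 3/2 := by rw [hρ']; simp
  have h3 : Real.sqrt 3 * Real.sqrt 3 = 3 := Real.mul_self_sqrt (by norm_num)
  have hρ2 : ρ^2 = ρ - 1 := by
    apply Complex.ext
    · rw [pow_two, Complex.mul_re, hre, him, Complex.sub_re, Complex.one_re, hre]
      nlinarith
    · rw [pow_two, Complex.mul_im, hre, him, Complex.sub_im, Complex.one_im, him]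
      ring
  have hρ0 : ρ ≠ 0 := by
    intro h
    rw [h] at him
    simp only [Complex.zero_im] at him
    nlinarith [sqrt3_pos]
  have hinvρ : ρ⁻¹ = 1 - ρ := by
    have hmul : ρ * (1 - ρ) = 1 := by linear_combination -hρ2
    exact inv_eq_of_mul_eq_one_right hmul
  have hrot := wzeta_rot (ρ := ρ) hρ2 hre him hρ0
  have hq1 : latPt 1 ρ ((1,0) : ℤ × ℤ) = 1 := by simp [latPt]
  have hhalf : -((1:ℂ)/2) ∈ Dset ρ := mem_half hre him
  have hz1 : (1+ρ)/3 - 1 ∈ Dset ρ := mem_z01 hre him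
  have hquasi := quasi hre him ((1,0) : ℤ × ℤ) (by rw [hq1]; exact hhalf) hz1
  rw [hq1] at hquasi
  have e1 : (1+ρ)/3 - 1 + 1 = (1+ρ)/3 := by ring
  rw [e1] at hquasi
  have e2 : ρ * (ρ * ((1+ρ)/3)) = (1+ρ)/3 - 1 := by
    linear_combination ((ρ+2)/3) * hρ2
  have hrot2 : wzeta 1 ρ ((1+ρ)/3 - 1) = ρ⁻¹ * (ρ⁻¹ * wzeta 1 ρ ((1+ρ)/3)) := by
    rw [← e2, hrot, hrot]
  have hrothalf : wzeta 1 ρ (ρ/2) = ρ⁻¹ * wzeta 1 ρ (1/2) := by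
    have h := hrot (1/2)
    rw [show ρ * ((1:ℂ)/2) = ρ/2 from by ring] at h
    exact h
  rw [hrot2] at hquasi
  -- hquasi : wzeta z0 = ρ⁻¹ (ρ⁻¹ wzeta z0) + 2 wzeta (1/2)
  have heta2 : eta2 ρ = (1-ρ) * eta1 ρ := by
    rw [eta1, eta2, hrothalf, hinvρ]
    ring
  have hq2 : wzeta 1 ρ ((1+ρ)/3)
      = (1-ρ) * ((1-ρ) * wzeta 1 ρ ((1+ρ)/3)) + eta1 ρ := by
    rw [eta1, ← hinvρ]
    linear_combination hquasi
  have hmain : wzeta 1 ρ ((1 + ρ) / 3) = (eta1 ρ + eta2 ρ) / 3 := by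
    rw [heta2]
    linear_combination ((2-ρ)/3) * hq2 + (wzeta 1 ρ ((1+ρ)/3) * (3-ρ)/3) * hρ2
  refine ⟨hmain, ?_⟩
  rw [heckeZ]
  push_cast
  have e3 : (1:ℂ)/3 + 1/3 * ρ = (1+ρ)/3 := by ring
  rw [e3, hmain]
  ring
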